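/- Let A > 0, B > 0, E₀ < 0 be reals with (A/2) + (B₂/4) − (B₁/4) = E₀ where B₁, B₂ ≥ 0 (so that E(u) = E₀ < 0), and let 0 < γ₂ < γ₁ < 2, β := 1/(2−γ₁) > 0. Define f(θ) = ((θ^{1+2β}−θ)/2)A + ((θ^{2+βγ₂}−θ)/4)B₂ − ((θ^{1+2β}−θ)/4)B₁ for θ ≥ 1. Then f'(θ) = ((1+2β)θ^{2β} − 1)(A/2 − B₁/4) + (((2+βγ₂)θ^{1+βγ₂} − 1)/4) B₂ and f'(θ) < 0 for all θ > 1, hence f(θ) < 0 for all θ > 1 (strict subadditivity scaling estimate). -/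

import Mathlib

open Real Set

lemma hda (A B₁ B₂ β γ₂ : ℝ) (f : ℝ → ℝ)
    (hf : ∀ θ, f θ = (θ ^ (1 + 2 * β) - θ) / 2 * A
        + (θ ^ (2 + β * γ₂) - θ) / 4 * B₂
        - (θ ^ (1 + 2 * β) - θ) / 4 * B₁) (θ : ℝ) (hθ : θ ≠ 0) :
    HasDerivAt f (((1 + 2 * β) * θ ^ (1 + 2 * β - 1) - 1) / 2 * A
        + ((2 + β * γ₂) * θ ^ (2 + β * γ₂ - 1) - 1) / 4 * B₂
        - ((1 + 2 * β) * θ ^ (1 + 2 * β - 1) - 1) / 4 * B₁) θ := by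
  have h1 : HasDerivAt (fun x : ℝ => x ^ (1 + 2 * β)) ((1 + 2 * β) * θ ^ (1 + 2 * β - 1)) θ :=
    Real.hasDerivAt_rpow_const (Or.inl hθ)
  have h2 : HasDerivAt (fun x : ℝ => x ^ (2 + β * γ₂)) ((2 + β * γ₂) * θ ^ (2 + β * γ₂ - 1)) θ :=
    Real.hasDerivAt_rpow_const (Or.inl hθ)
  have hid : HasDerivAt (fun x : ℝ => x) 1 θ := hasDerivAt_id θ
  have H := (((h1.sub hid).div_const 2).mul_const A).add
      ((((h2.sub hid).div_const 4).mul_const B₂).sub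
        (((h1.sub hid).div_const 4).mul_const B₁))
  have hfe : f = fun x => (x ^ (1 + 2 * β) - x) / 2 * A
        + ((x ^ (2 + β * γ₂) - x) / 4 * B₂
        - (x ^ (1 + 2 * β) - x) / 4 * B₁) := by
    funext x; rw [hf x]; ring
  rw [hfe]
  refine H.congr_deriv ?_
  ring

theorem strict_subadditivity_scaling
    (A B₁ B₂ γ₁ γ₂ β : ℝ)
    (hA : 0 < A) (hB₁ : 0 ≤ B₁) (hB₂ : 0 ≤ B₂)
    (hγ2 : 0 < γ₂) (h21 : γ₂ < γ₁) (h12 : γ₁ < 2)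
    (hβ : β = 1 / (2 - γ₁))
    (hE : A / 2 + B₂ / 4 - B₁ / 4 < 0)
    (f : ℝ → ℝ)
    (hf : ∀ θ, f θ = (θ ^ (1 + 2 * β) - θ) / 2 * A
        + (θ ^ (2 + β * γ₂) - θ) / 4 * B₂
        - (θ ^ (1 + 2 * β) - θ) / 4 * B₁) :
    ∀ θ : ℝ, 1 < θ →
      deriv f θ = ((1 + 2 * β) * θ ^ (2 * β) - 1) * (A / 2 - B₁ / 4)
          + ((2 + β * γ₂) * θ ^ (1 + β * γ₂) - 1) / 4 * B₂ ∧
      deriv f θ < 0 ∧ f θ < 0 := by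
  have hγ1pos : 0 < 2 - γ₁ := by linarith
  have hβpos : 0 < β := by rw [hβ]; positivity
  have hexp : 1 + β * γ₂ < 2 * β := by
    have h1 : β * (2 - γ₁) = 1 := by rw [hβ]; field_simp
    nlinarith [mul_lt_mul_of_pos_left h21 hβpos]
  -- deriv formula for every θ > 1
  have hderiv : ∀ θ : ℝ, (1:ℝ) < θ →
      deriv f θ = ((1 + 2 * β) * θ ^ (2 * β) - 1) * (A / 2 - B₁ / 4)
          + ((2 + β * γ₂) * θ ^ (1 + β * γ₂) - 1) / 4 * B₂ := by
    intro θ hθ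
    have hθ0 : θ ≠ 0 := by positivity
    have H := (hda A B₁ B₂ β γ₂ f hf θ hθ0).deriv
    rw [show 1 + 2 * β - 1 = 2 * β by ring, show 2 + β * γ₂ - 1 = 1 + β * γ₂ by ring] at H
    rw [H]; ring
  have hdneg : ∀ θ : ℝ, (1:ℝ) < θ → deriv f θ < 0 := by
    intro θ hθ
    rw [hderiv θ hθ]
    have hθ0 : (0:ℝ) < θ := by linarith
    have ht2β : 1 < θ ^ (2 * β) :=
      (Real.one_lt_rpow_iff_of_pos hθ0).mpr (Or.inl ⟨hθ, by positivity⟩)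
    have htlt : θ ^ (1 + β * γ₂) < θ ^ (2 * β) :=
      (Real.rpow_lt_rpow_left_iff hθ).mpr hexp
    have htpos : (0:ℝ) < θ ^ (1 + β * γ₂) := Real.rpow_pos_of_pos hθ0 _
    have hQP : (2 + β * γ₂) * θ ^ (1 + β * γ₂) < (1 + 2 * β) * θ ^ (2 * β) := by
      have h2 : 2 + β * γ₂ < 1 + 2 * β := by linarith
      nlinarith
    have hP : 0 < (1 + 2 * β) * θ ^ (2 * β) - 1 := by nlinarith
    have hC : A / 2 - B₁ / 4 < -(B₂ / 4) := by linarith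
    nlinarith [mul_lt_mul_of_pos_left hC hP, mul_nonneg (sub_nonneg.mpr hQP.le) hB₂]
  intro θ hθ
  refine ⟨hderiv θ hθ, hdneg θ hθ, ?_⟩
  have hcont : ContinuousOn f (Set.Ici (1:ℝ)) := by
    intro x hx
    have hx0 : x ≠ 0 := by simp only [Set.mem_Ici] at hx; positivity
    exact ((hda A B₁ B₂ β γ₂ f hf x hx0).differentiableAt.continuousAt).continuousWithinAt
  have hanti : StrictAntiOn f (Set.Ici (1:ℝ)) := by
    apply strictAntiOn_of_deriv_neg (convex_Ici 1) hcont
    intro x hx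
    rw [interior_Ici] at hx
    exact hdneg x hx
  have hf1 : f 1 = 0 := by
    rw [hf 1]; simp [Real.one_rpow]
  have := hanti (Set.self_mem_Ici) (Set.mem_Ici.mpr hθ.le) hθ
  linarith
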